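/- Let X be a nonnegative real-valued random variable on a probability space with E[X] and E[X²] finite, let I be the indicator of a measurable event, and let a, b > 0. Then a·E[X·I] + b·E[X²·(1 − I)] ≥ min{ (a/2)·E[X] , b·(E[X])² }. -/

import Mathlib

open MeasureTheory

noncomputable section

/-- For a nonnegative random variable `X` with `E[X]` and
`E[X²]` finite, an indicator `I` of a measurable event, and `a, b > 0`,
`a·E[X·I] + b·E[X²·(1 - I)] ≥ min{(a/2)·E[X], b·(E[X])²}`. -/
theorem indicator_split_min_inequality
    {Ω : Type*} [MeasurableSpace Ω]
    (μ : Measure Ω) [IsProbabilityMeasure μ]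
    (X : Ω → ℝ) (A : Set Ω) (a b : ℝ)
    (hA : MeasurableSet A)
    (ha : 0 < a) (hb : 0 < b)
    (hX0 : ∀ ω, 0 ≤ X ω)
    (hX1 : Integrable X μ)
    (hX2 : Integrable (fun ω => X ω ^ 2) μ) :
    min (a / 2 * ∫ ω, X ω ∂μ) (b * (∫ ω, X ω ∂μ) ^ 2) ≤
      a * ∫ ω, X ω * A.indicator (fun _ => (1 : ℝ)) ω ∂μ +
        b * ∫ ω, X ω ^ 2 * (1 - A.indicator (fun _ => (1 : ℝ)) ω) ∂μ := by
  set I : Ω → ℝ := A.indicator (fun _ => (1 : ℝ)) with hI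
  have hIval : ∀ ω, I ω = 0 ∨ I ω = 1 := by
    intro ω
    by_cases h : ω ∈ A <;> simp [hI, Set.indicator_apply, h]
  have hImeas : Measurable I := measurable_const.indicator hA
  set Y : Ω → ℝ := fun ω => X ω * (1 - I ω) with hY
  have hYmeas : AEStronglyMeasurable Y μ :=
    hX1.aestronglyMeasurable.mul ((measurable_const.sub hImeas).aestronglyMeasurable)
  have hYbound : ∀ ω, ‖Y ω‖ ≤ ‖X ω‖ := by
    intro ω
    rcases hIval ω with h | h <;>
      simp [hY, h, abs_of_nonneg (hX0 ω), hX0 ω]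
  -- Y is in L²
  have hXm2 : MemLp X 2 μ := (memLp_two_iff_integrable_sq hX1.aestronglyMeasurable).2 hX2
  have hYm2 : MemLp Y 2 μ := hXm2.of_le hYmeas (Filter.Eventually.of_forall hYbound)
  -- Cauchy-Schwarz / Jensen: (∫ Y)² ≤ ∫ Y²
  have hvar := ProbabilityTheory.variance_nonneg Y μ
  rw [ProbabilityTheory.variance_eq_sub hYm2] at hvar
  have hsq : (∫ ω, Y ω ∂μ) ^ 2 ≤ ∫ ω, (Y ^ 2) ω ∂μ := by linarith
  have hYsq : ∀ ω, (Y ^ 2) ω = X ω ^ 2 * (1 - I ω) := by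
    intro ω
    rcases hIval ω with h | h <;> simp [hY, h, mul_pow]
  have hQ : (∫ ω, Y ω ∂μ) ^ 2 ≤ ∫ ω, X ω ^ 2 * (1 - I ω) ∂μ := by
    calc (∫ ω, Y ω ∂μ) ^ 2 ≤ ∫ ω, (Y ^ 2) ω ∂μ := hsq
    _ = ∫ ω, X ω ^ 2 * (1 - I ω) ∂μ := by
        exact integral_congr_ae (Filter.Eventually.of_forall hYsq)
  -- integrability of Y
  have hYint : Integrable Y μ :=
    hX1.mono hYmeas (Filter.Eventually.of_forall hYbound)
  -- split of the integral
  have hsplit : ∫ ω, X ω * I ω ∂μ = (∫ ω, X ω ∂μ) - ∫ ω, Y ω ∂μ := by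
    rw [← integral_sub hX1 hYint]
    congr 1
    funext ω
    simp [hY]; ring
  set m := ∫ ω, X ω ∂μ with hm
  set T := ∫ ω, Y ω ∂μ with hT
  have hT0 : 0 ≤ T := by
    apply integral_nonneg
    intro ω
    rcases hIval ω with h | h <;> simp [hY, h, hX0 ω]
  have hTm : T ≤ m := by
    apply integral_mono hYint hX1
    intro ω
    rcases hIval ω with h | h <;> simp [hY, h, hX0 ω]
  rw [hsplit]
  have hQ' : T ^ 2 ≤ ∫ ω, X ω ^ 2 * (1 - I ω) ∂μ := hQ
  set Q := ∫ ω, X ω ^ 2 * (1 - I ω) ∂μ with hQdef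
  -- now pure algebra
  rcases le_or_gt a (2 * b * m) with hcase | hcase
  · refine le_trans (min_le_left _ _) ?_
    nlinarith [mul_le_mul_of_nonneg_left hQ' hb.le, sq_nonneg (2 * b * T - a),
      mul_nonneg ha.le (sub_nonneg.2 hcase), hb]
  · refine le_trans (min_le_right _ _) ?_
    have h1 : b * T ^ 2 ≤ b * Q := mul_le_mul_of_nonneg_left hQ' hb.le
    have h2 : 0 ≤ (m - T) * (a - b * (m + T)) :=
      mul_nonneg (sub_nonneg.2 hTm) (by nlinarith [mul_le_mul_of_nonneg_left hTm hb.le])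
    nlinarith [h1, h2]
  
end
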